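/- Let λ = (λ_1,…,λ_m) be a partition of k and let t_λ = B_+(ℓ_{λ_1}ℓ_{λ_2}⋯ℓ_{λ_m}) be the rooted tree obtained by attaching the ladders ℓ_{λ_1},…,ℓ_{λ_m} to a new root. Let 𝔑 : ℚT → ℚT be the linear operator 𝔑(t) = ℓ_2 ∘ t, where ∘ is the Grossman–Larson product and ℓ_2 is the two-vertex ladder. Then the coefficient n(•; t_λ) of t_λ in 𝔑^k(•) equals (1/|Sym(t_λ)|)·k!/(λ_1!·λ_2!⋯λ_m!), the multinomial coefficient of λ divided by |Sym(t_λ)|. -/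

import Mathlib

/-! ### Planar rooted trees -/

/-- A planar rooted tree: a root with an ordered list of branches.
`PTree.node [T₁,…,T_k]` is `B₊(T₁⋯T_k)`; `PTree.node []` is the one-vertex tree `•`. -/
inductive PTree : Type where
  | node : List PTree → PTree

instance : Inhabited PTree := ⟨.node []⟩

noncomputable instance : DecidableEq PTree := Classical.decEq _

/-- Number of vertices of a planar rooted tree. -/
def PTree.size : PTree → ℕ
  | .node l => 1 + (l.attach.map (fun x => PTree.size x.1)).sum
decreasing_by
  have h := List.sizeOf_lt_of_mem x.2
  simp only [PTree.node.sizeOf_spec]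
  omega

/-! ### Rooted trees -/

/-- Isomorphism of the underlying rooted trees: the lists of branches agree
up to permutation and recursive isomorphism. -/
inductive PTree.Equiv : PTree → PTree → Prop where
  | node {l m m' : List PTree} :
      List.Forall₂ PTree.Equiv l m' → List.Perm m' m → PTree.Equiv (.node l) (.node m)

/-- Rooted trees: planar rooted trees modulo isomorphism. -/
def RTree : Type := Quot PTree.Equiv

/-- The underlying rooted tree of a planar rooted tree. -/
def toR : PTree → RTree := Quot.mk _

/-- A choice of planar representative of a rooted tree. -/
noncomputable def RTree.out : RTree → PTree := Quot.out

noncomputable instance : DecidableEq RTree := Classical.decEq _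

/-- The order of the symmetry group of (the underlying rooted tree of) a planar
rooted tree: `|Sym(B₊(t₁⋯t_k))| = (∏_s m_s!)·∏ᵢ |Sym(tᵢ)|`, where `m_s` is the
multiplicity of the isomorphism type `s` among the branches `t₁,…,t_k`. -/
noncomputable def PTree.symOrder : PTree → ℕ
  | .node l =>
      (l.attach.map (fun x => PTree.symOrder x.1)).prod *
      (((l.map toR : List RTree) : Multiset RTree).toFinset.prod
        (fun s => (Multiset.count s (l.map toR : Multiset RTree)).factorial))
decreasing_by
  have h := List.sizeOf_lt_of_mem x.2
  simp only [PTree.node.sizeOf_spec]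
  omega

/-- The order of the symmetry group of a rooted tree. -/
noncomputable def RTree.sym (t : RTree) : ℕ := t.out.symOrder

/-- Number of vertices of a rooted tree. -/
noncomputable def RTree.size (t : RTree) : ℕ := t.out.size

/-- `B₊` for rooted trees: attach a new root to a multiset forest. -/
noncomputable def RTree.node (m : Multiset RTree) : RTree :=
  toR (PTree.node (m.toList.map RTree.out))

/-- The one-vertex rooted tree `•`. -/
noncomputable def RTree.bullet : RTree := toR (.node [])

/-! ### The Grossman–Larson product -/

namespace PTree

mutual
/-- The list of vertices of a planar rooted tree, as paths from the root. -/
def positions : PTree → List (List ℕ)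
  | .node l => [] :: positionsList 0 l
/-- Vertices of the trees in a forest, as paths (first coordinate = index in forest). -/
def positionsList : ℕ → List PTree → List (List ℕ)
  | _, [] => []
  | i, t :: ts => (positions t).map (i :: ·) ++ positionsList (i+1) ts
end

/-- Attach the tree `s` by a new edge to the vertex of a tree at the given path
(as a new last child). -/
def attachAt (s : PTree) : PTree → List ℕ → PTree
  | .node l, [] => .node (l ++ [s])
  | .node l, i :: p => .node (l.set i (attachAt s l[i]! p))

/-- Attach several trees at given vertices, in order. -/
def attachMany : PTree → List (List ℕ × PTree) → PTree
  | t, [] => t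
  | t, (p, s) :: rest => attachMany (attachAt s t p) rest

end PTree

/-- Grossman–Larson product of planar representatives, with values in the free
`k`-module on rooted trees: for `t = B₊(t₁⋯t_n)` and a tree `t'` with `m`
vertices, the sum of the `m^n` rooted trees obtained by attaching each `tᵢ`
to a vertex of `t'`. -/
noncomputable def glMulP (k : Type*) [Semiring k] (t t' : PTree) : RTree →₀ k :=
  match t with
  | .node l =>
    (((List.replicate l.length (PTree.positions t')).sections).map
      (fun ps => Finsupp.single (toR (PTree.attachMany t' (ps.zip l))) (1 : k))).sum

/-- Grossman–Larson product of rooted trees. -/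
noncomputable def glMul (k : Type*) [Semiring k] (a b : RTree) : RTree →₀ k :=
  glMulP k a.out b.out

/-- Bilinear extension of the Grossman–Larson product to the free module `kT`. -/
noncomputable def glMulF {k : Type*} [CommSemiring k] (f g : RTree →₀ k) : RTree →₀ k :=
  f.sum (fun a x => g.sum (fun b y => (x * y) • glMul k a b))

/-- `ladderP n` is the unbranched planar rooted tree with `n + 1` vertices; the
ladder `ℓ_i` of the paper (with `i ≥ 1` vertices) is `ladderP (i - 1)`. -/
def ladderP : ℕ → PTree
  | 0 => .node []
  | n + 1 => .node [ladderP n]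

section GOCaux
open PTree

lemma ladderP_zero : ladderP 0 = .node [] := rfl
lemma ladderP_succ (n : ℕ) : ladderP (n+1) = .node [ladderP n] := rfl

lemma ladderP_injective : Function.Injective ladderP := by
  intro a
  induction a with
  | zero => intro b h; cases b with
    | zero => rfl
    | succ b => simp [ladderP_zero, ladderP_succ] at h
  | succ a ih => intro b h; cases b with
    | zero => simp [ladderP_zero, ladderP_succ] at h
    | succ b => simp only [ladderP_succ, PTree.node.injEq, List.cons.injEq, and_true] at h
                exact congrArg _ (ih h)

lemma equiv_ladder_refl (n : ℕ) : PTree.Equiv (ladderP n) (ladderP n) := by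
  induction n with
  | zero => exact .node List.Forall₂.nil (List.Perm.refl _)
  | succ n ih => exact .node (List.Forall₂.cons ih List.Forall₂.nil) (List.Perm.refl _)

lemma equiv_ladder_right : ∀ (n : ℕ) {y : PTree}, PTree.Equiv (ladderP n) y → y = ladderP n := by
  intro n
  induction n with
  | zero =>
    intro y h
    rw [ladderP_zero] at h ⊢
    cases h with
    | node hf hp =>
      cases hf
      rw [List.perm_nil.mp hp.symm]
  | succ n ih =>
    intro y h
    rw [ladderP_succ] at h ⊢
    cases h with
    | node hf hp =>
      cases hf with
      | cons hxy htail =>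
        cases htail
        rw [List.perm_singleton.mp hp.symm, ih hxy]

lemma equiv_ladder_left : ∀ (n : ℕ) {y : PTree}, PTree.Equiv y (ladderP n) → y = ladderP n := by
  intro n
  induction n with
  | zero =>
    intro y h
    rw [ladderP_zero] at h ⊢
    cases h with
    | node hf hp =>
      rw [List.perm_nil.mp hp] at hf
      cases hf
      rfl
  | succ n ih =>
    intro y h
    rw [ladderP_succ] at h ⊢
    cases h with
    | node hf hp =>
      rw [List.perm_singleton.mp hp] at hf
      cases hf with
      | cons hxy htail =>
        cases htail
        rw [ih hxy]

lemma forall₂_right_eq {l m : List PTree} (h : List.Forall₂ PTree.Equiv l m)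
    (hl : ∀ x ∈ l, ∃ n, x = ladderP n) : m = l := by
  induction h with
  | nil => rfl
  | @cons a b l' m' hab htail ih =>
    obtain ⟨n, rfl⟩ := hl _ (List.mem_cons_self)
    rw [equiv_ladder_right n hab, ih (fun x hx => hl x (List.mem_cons_of_mem _ hx))]

lemma forall₂_left_eq {l m : List PTree} (h : List.Forall₂ PTree.Equiv l m)
    (hm : ∀ x ∈ m, ∃ n, x = ladderP n) : l = m := by
  induction h with
  | nil => rfl
  | @cons a b l' m' hab htail ih =>
    obtain ⟨n, rfl⟩ := hm _ (List.mem_cons_self)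
    rw [equiv_ladder_left n hab, ih (fun x hx => hm x (List.mem_cons_of_mem _ hx))]

/-- being `node` of a permutation of `LL` -/
def LadF (LL : List PTree) (s : PTree) : Prop := ∃ l, s = PTree.node l ∧ l.Perm LL

lemma equiv_ladf {LL : List PTree} (hLL : ∀ x ∈ LL, ∃ n, x = ladderP n) {s t : PTree}
    (h : PTree.Equiv s t) : LadF LL s ↔ LadF LL t := by
  cases h with
  | @node l m m' hf hp =>
    constructor
    · rintro ⟨l₀, hl₀, hperm⟩
      obtain rfl : l = l₀ := by cases hl₀; rfl
      have hlad : ∀ x ∈ l, ∃ n, x = ladderP n := fun x hx => hLL x (hperm.mem_iff.mp hx)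
      have : m' = l := forall₂_right_eq hf hlad
      exact ⟨m, rfl, (hp.symm.trans (this ▸ List.Perm.refl m')).trans hperm⟩
    · rintro ⟨m₀, hm₀, hperm⟩
      obtain rfl : m = m₀ := by cases hm₀; rfl
      have hm' : m'.Perm LL := hp.trans hperm
      have hlad : ∀ x ∈ m', ∃ n, x = ladderP n := fun x hx => hLL x (hm'.mem_iff.mp hx)
      have : l = m' := forall₂_left_eq hf hlad
      exact ⟨l, rfl, (this ▸ hm')⟩

lemma forall₂_refl_lad {l : List PTree} (h : ∀ x ∈ l, ∃ n, x = ladderP n) :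
    List.Forall₂ PTree.Equiv l l := by
  induction l with
  | nil => exact .nil
  | cons a l ih =>
    obtain ⟨n, hn⟩ := h a (List.mem_cons_self)
    exact .cons (hn ▸ equiv_ladder_refl n) (ih (fun x hx => h x (List.mem_cons_of_mem _ hx)))

lemma toR_eq_node_iff {LL : List PTree} (hLL : ∀ x ∈ LL, ∃ n, x = ladderP n) (s : PTree) :
    toR s = toR (.node LL) ↔ LadF LL s := by
  constructor
  · intro h
    have h' : Relation.EqvGen PTree.Equiv s (.node LL) := Quot.eq.mp h
    have key : ∀ a b : PTree, Relation.EqvGen PTree.Equiv a b → (LadF LL a ↔ LadF LL b) := by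
      intro a b hab
      induction hab with
      | rel a b hab => exact equiv_ladf hLL hab
      | refl a => exact Iff.rfl
      | symm a b _ ih => exact ih.symm
      | trans a b c _ _ ih1 ih2 => exact ih1.trans ih2
    exact (key _ _ h').mpr ⟨LL, rfl, List.Perm.refl _⟩
  · rintro ⟨l, rfl, hperm⟩
    exact Quot.sound (.node (forall₂_refl_lad (fun x hx => hLL x (hperm.mem_iff.mp hx))) hperm)

lemma exists_map_lad {l : List PTree} (h : ∀ x ∈ l, ∃ n, x = ladderP n) :
    ∃ ns : List ℕ, l = ns.map ladderP := by
  induction l with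
  | nil => exact ⟨[], rfl⟩
  | cons a l ih =>
    obtain ⟨n, hn⟩ := h a (List.mem_cons_self)
    obtain ⟨ns, hns⟩ := ih (fun x hx => h x (List.mem_cons_of_mem _ hx))
    exact ⟨n :: ns, by simp [hn, hns]⟩

/-- the rooted tree `B₊` of a multiset of ladder lengths -/
noncomputable def Tm (ν : Multiset ℕ) : RTree := toR (.node ((ν.map ladderP).toList))

lemma mem_toList_lad (ν : Multiset ℕ) : ∀ x ∈ (ν.map ladderP).toList, ∃ n, x = ladderP n := by
  intro x hx
  rw [Multiset.mem_toList, Multiset.mem_map] at hx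
  obtain ⟨n, _, rfl⟩ := hx
  exact ⟨n, rfl⟩

lemma toR_node_lad_eq_Tm_iff (a : List ℕ) (β : Multiset ℕ) :
    toR (.node (a.map ladderP)) = Tm β ↔ (a : Multiset ℕ) = β := by
  rw [Tm, toR_eq_node_iff (mem_toList_lad β)]
  constructor
  · rintro ⟨l, hl, hperm⟩
    obtain rfl : a.map ladderP = l := by cases hl; rfl
    have : ((a.map ladderP : List PTree) : Multiset PTree) = ((β.map ladderP).toList : Multiset PTree) :=
      Multiset.coe_eq_coe.mpr hperm
    rw [Multiset.coe_toList] at this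
    rw [← Multiset.map_coe] at this
    exact Multiset.map_injective ladderP_injective this
  · rintro rfl
    refine ⟨a.map ladderP, rfl, Multiset.coe_eq_coe.mp ?_⟩
    rw [Multiset.coe_toList, Multiset.map_coe]

lemma Tm_out (ν : Multiset ℕ) : ∃ l' : List ℕ, (Tm ν).out = PTree.node (l'.map ladderP) ∧
    (l' : Multiset ℕ) = ν := by
  have h : toR (Tm ν).out = Tm ν := Quot.out_eq _
  rw [Tm, toR_eq_node_iff (mem_toList_lad ν)] at h
  obtain ⟨l, hl, hperm⟩ := h
  have hlad : ∀ x ∈ l, ∃ n, x = ladderP n := fun x hx => mem_toList_lad ν x (hperm.mem_iff.mp hx)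
  obtain ⟨ns, rfl⟩ := exists_map_lad hlad
  refine ⟨ns, hl, ?_⟩
  have : ((ns.map ladderP : List PTree) : Multiset PTree) = ((ν.map ladderP).toList : Multiset PTree) :=
    Multiset.coe_eq_coe.mpr hperm
  rw [Multiset.coe_toList, ← Multiset.map_coe] at this
  exact Multiset.map_injective ladderP_injective this

lemma Tm_injective : Function.Injective Tm := by
  intro a b h
  obtain ⟨l, hl, hcoe⟩ := Tm_out a
  have h1 : toR (.node (l.map ladderP)) = Tm a := by rw [← hl]; exact Quot.out_eq _
  have h2 : toR (.node (l.map ladderP)) = Tm b := h1.trans h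
  rw [toR_node_lad_eq_Tm_iff] at h2
  rw [← hcoe, h2]

end GOCaux
section GOCaux2
open PTree

lemma positions_node (l : List PTree) : positions (.node l) = [] :: positionsList 0 l := by
  rw [positions]

lemma positionsList_nil (j : ℕ) : positionsList j [] = [] := by rw [positionsList]

lemma positionsList_cons (j : ℕ) (t : PTree) (ts : List PTree) :
    positionsList j (t :: ts) = (positions t).map (j :: ·) ++ positionsList (j+1) ts := by
  rw [positionsList]

lemma mem_positionsList {p : List ℕ} : ∀ {l : List PTree} {j : ℕ},
    p ∈ positionsList j l ↔ ∃ i, i < l.length ∧ ∃ q ∈ (l[i]!).positions, p = (j+i) :: q := by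
  intro l
  induction l with
  | nil => intro j; simp [positionsList_nil]
  | cons t ts ih =>
    intro j
    rw [positionsList_cons, List.mem_append, List.mem_map, ih]
    constructor
    · rintro (⟨q, hq, rfl⟩ | ⟨i, hi, q, hq, rfl⟩)
      · exact ⟨0, by simp, q, by simpa using hq, by simp⟩
      · refine ⟨i+1, by simpa using hi, q, ?_, by ring_nf⟩
        simpa using hq
    · rintro ⟨i, hi, q, hq, rfl⟩
      cases i with
      | zero => exact Or.inl ⟨q, by simpa using hq, by simp⟩
      | succ i =>
        refine Or.inr ⟨i, by simpa using hi, q, by simpa using hq, by ring_nf⟩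

lemma mem_positions {p : List ℕ} {l : List PTree} :
    p ∈ positions (.node l) ↔ p = [] ∨ ∃ i, i < l.length ∧ ∃ q ∈ (l[i]!).positions, p = i :: q := by
  rw [positions_node, List.mem_cons, mem_positionsList]
  simp

lemma positions_ladderP (n : ℕ) :
    positions (ladderP n) = (List.range (n+1)).map (fun j => List.replicate j 0) := by
  induction n with
  | zero => rw [ladderP_zero, positions_node, positionsList_nil]; rfl
  | succ n ih =>
    rw [ladderP_succ, positions_node, positionsList_cons, positionsList_nil, ih]
    conv_rhs => rw [List.range_succ_eq_map]
    simp [List.map_map, Function.comp_def, List.replicate_succ]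

lemma attach_ladder_top (n : ℕ) :
    attachAt (.node []) (ladderP n) (List.replicate n 0) = ladderP (n+1) := by
  induction n with
  | zero => rfl
  | succ n ih =>
    rw [List.replicate_succ, ladderP_succ, attachAt]
    simp only [List.getElem!_cons_zero, List.set_cons_zero, ih]
    rfl

lemma attach_eq_ladder : ∀ {q : List ℕ} {c : PTree} {v : ℕ},
    q ∈ c.positions → attachAt (.node []) c q = ladderP v →
    1 ≤ v ∧ c = ladderP (v-1) ∧ q = List.replicate (v-1) 0 := by
  intro q
  induction q with
  | nil =>
    rintro ⟨l⟩ v _ h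
    rw [attachAt] at h
    cases v with
    | zero => rw [ladderP_zero] at h; simp at h
    | succ m =>
      rw [ladderP_succ] at h
      simp only [PTree.node.injEq] at h
      rcases l with _ | ⟨a, l⟩
      · simp only [List.nil_append, List.cons.injEq, and_true] at h
        cases m with
        | zero => simp [ladderP_zero]
        | succ m => rw [ladderP_succ] at h; simp at h
      · exfalso
        simpa using congrArg List.length h
  | cons i q ih =>
    rintro ⟨l⟩ v hq h
    rw [mem_positions] at hq
    rcases hq with h' | ⟨i', hi', q', hq', heq⟩
    · simp at h'
    injection heq with h1 h2
    subst h1; subst h2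
    rw [attachAt] at h
    cases v with
    | zero =>
      rw [ladderP_zero] at h
      simp only [PTree.node.injEq] at h
      have hl := congrArg List.length h
      simp at hl
      simp [hl] at hi'
    | succ m =>
      rw [ladderP_succ] at h
      simp only [PTree.node.injEq] at h
      have hlen : l.length = 1 := by simpa using congrArg List.length h
      rcases l with _ | ⟨c₀, l⟩
      · simp at hlen
      rcases l with _ | ⟨c₁, l⟩
      · obtain rfl : i = 0 := by simp at hi'; omega
        simp only [List.getElem!_cons_zero, List.set_cons_zero, List.cons.injEq, and_true] at h
        simp only [List.getElem!_cons_zero] at hq'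
        obtain ⟨hm, hc, hqr⟩ := ih hq' h
        refine ⟨by omega, ?_, ?_⟩
        · rw [hc]
          have hm' : m - 1 + 1 = m := by omega
          rw [← ladderP_succ, hm']
          simp
        · rw [hqr]
          have hm' : m + 1 - 1 = (m - 1) + 1 := by omega
          rw [hm', List.replicate_succ]
      · simp at hlen
end GOCaux2
section GOCaux3
open PTree

lemma coe_set_add : ∀ (l : List PTree) (i : ℕ), i < l.length → ∀ (x : PTree),
    ((l.set i x : List PTree) : Multiset PTree) + {l[i]!} = (l : Multiset PTree) + {x} := by
  intro l
  induction l with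
  | nil => intro i hi; simp at hi
  | cons a l ih =>
    intro i hi x
    cases i with
    | zero =>
      simp only [List.set_cons_zero, List.getElem!_cons_zero]
      simp only [← Multiset.cons_coe]
      rw [add_comm, Multiset.singleton_add, add_comm, Multiset.singleton_add, Multiset.cons_swap]
    | succ i =>
      simp only [List.set_cons_succ, List.getElem!_cons_succ]
      simp only [← Multiset.cons_coe, Multiset.cons_add]
      rw [ih i (by simpa using hi) x]

lemma set_append_len {α : Type*} : ∀ (pre : List α) (w x : α) (tail : List α),
    (pre ++ w :: tail).set pre.length x = pre ++ x :: tail := by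
  intro pre
  induction pre with
  | nil => intro w x tail; rfl
  | cons a pre ih => intro w x tail; simp [List.set_cons_succ, ih]

lemma getElem!_append_len : ∀ (pre : List PTree) (w : PTree) (tail : List PTree),
    (pre ++ w :: tail)[pre.length]! = w := by
  intro pre
  induction pre with
  | nil => intro w tail; simp
  | cons a pre ih => intro w tail; simpa using ih w tail

lemma erase_add_cons (A B : Multiset ℕ) (w : ℕ) : (A + w ::ₘ B).erase w = A + B := by
  rw [Multiset.add_cons, Multiset.erase_cons_head]

lemma indicator_sum (m : Multiset ℕ) (a : ℕ) :
    (m.map (fun w => if w = a then (1:ℚ) else 0)).sum = (m.count a : ℚ) := by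
  induction m using Multiset.induction with
  | empty => simp
  | cons b s ih =>
    rw [Multiset.map_cons, Multiset.sum_cons, ih, Multiset.count_cons]
    by_cases hba : b = a
    · subst hba
      simp
      ring
    · simp [hba, Ne.symm hba]

lemma list_single_sum_apply {β : Type*} (xs : List β) (f : β → RTree) (r : RTree) :
    (((xs.map (fun p => Finsupp.single (f p) (1:ℚ)))).sum) r
      = (xs.map (fun p => if f p = r then (1:ℚ) else 0)).sum := by
  induction xs with
  | nil => simp
  | cons x xs ih =>
    rw [List.map_cons, List.sum_cons, Finsupp.add_apply, ih, List.map_cons, List.sum_cons,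
      Finsupp.single_apply]

lemma countCL (νt : Multiset ℕ) (νL : List ℕ) :
    ∀ (suf pre : List ℕ), νL = pre ++ suf →
    ((positionsList pre.length (suf.map ladderP)).map
      (fun p => if toR (attachAt (.node []) (.node (νL.map ladderP)) p) = Tm νt then (1:ℚ) else 0)).sum
    = (suf.map (fun w => if (νL : Multiset ℕ).erase w + {w+1} = νt then (1:ℚ) else 0)).sum := by
  intro suf
  induction suf with
  | nil => intro pre h; simp [positionsList_nil]
  | cons w tail ih =>
    intro pre h
    rw [List.map_cons, positionsList_cons, List.map_append, List.sum_append, List.map_map,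
      List.map_cons, List.sum_cons]
    have hpre1 : pre.length + 1 = (pre ++ [w]).length := by simp
    have h2 : νL = (pre ++ [w]) ++ tail := by simpa using h
    rw [hpre1, ih (pre ++ [w]) h2]
    congr 1
    -- remaining: sum over positions of ladder w
    have hset : ∀ X : PTree, (νL.map ladderP).set pre.length X
        = pre.map ladderP ++ X :: tail.map ladderP := by
      intro X
      rw [h, List.map_append, List.map_cons]
      have : pre.length = (pre.map ladderP).length := by simp
      rw [this, set_append_len]
    have hget : (νL.map ladderP)[pre.length]! = ladderP w := by
      rw [h, List.map_append, List.map_cons]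
      have : pre.length = (pre.map ladderP).length := by simp
      rw [this, getElem!_append_len]
    rw [positions_ladderP, List.range_succ, List.map_append, List.map_append, List.sum_append,
      List.map_map, List.map_map]
    simp only [Function.comp_def, List.map_cons, List.map_nil, List.sum_cons, List.sum_nil,
      add_zero]
    have hzero : ∀ x ∈ (List.range w).map (fun t =>
        if toR (attachAt (.node []) (.node (νL.map ladderP)) (pre.length :: List.replicate t 0))
          = Tm νt then (1:ℚ) else 0), x = 0 := by
      intro x hx
      rw [List.mem_map] at hx
      obtain ⟨t, ht, rfl⟩ := hx
      rw [List.mem_range] at ht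
      rw [if_neg]
      intro hcon
      rw [attachAt] at hcon
      rw [hget, hset] at hcon
      rw [Tm, toR_eq_node_iff (mem_toList_lad νt)] at hcon
      obtain ⟨l, hl, hperm⟩ := hcon
      obtain rfl : pre.map ladderP ++ attachAt (.node []) (ladderP w) (List.replicate t 0) :: tail.map ladderP = l := by
        cases hl; rfl
      have hX : attachAt (.node []) (ladderP w) (List.replicate t 0) ∈
          ((νt.map ladderP).toList) := by
        apply hperm.mem_iff.mp
        simp
      obtain ⟨u, hu⟩ := mem_toList_lad νt _ hX
      have hmem : List.replicate t 0 ∈ (ladderP w).positions := by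
        rw [positions_ladderP, List.mem_map]
        exact ⟨t, by rw [List.mem_range]; omega, rfl⟩
      obtain ⟨hu1, hcw, hrep⟩ := attach_eq_ladder hmem hu
      have : t = u - 1 := by
        have := congrArg List.length hrep
        simpa using this
      have : w = u - 1 := ladderP_injective hcw
      omega
    rw [List.sum_eq_zero hzero, zero_add]
    rw [attachAt, hget, hset, attach_ladder_top]
    have : (pre.map ladderP ++ ladderP (w+1) :: tail.map ladderP) = (pre ++ (w+1) :: tail).map ladderP := by
      simp
    rw [this]
    simp only [toR_node_lad_eq_Tm_iff]
    have hms : ((pre ++ (w+1) :: tail : List ℕ) : Multiset ℕ)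
        = (νL : Multiset ℕ).erase w + {w+1} := by
      rw [h]
      have h1 : ((pre ++ w :: tail : List ℕ) : Multiset ℕ) = (pre : Multiset ℕ) + w ::ₘ (tail : Multiset ℕ) := by
        rw [Multiset.cons_coe, ← Multiset.coe_add]
      have h2 : ((pre ++ (w+1) :: tail : List ℕ) : Multiset ℕ) = (pre : Multiset ℕ) + (w+1) ::ₘ (tail : Multiset ℕ) := by
        rw [Multiset.cons_coe, ← Multiset.coe_add]
      rw [h1, h2, erase_add_cons, Multiset.add_cons]
      rw [add_comm ((pre : Multiset ℕ) + (tail : Multiset ℕ)) {w+1}, Multiset.singleton_add]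
    simp only [hms]

lemma countFull (νt : Multiset ℕ) (νL : List ℕ) :
    ((positions (.node (νL.map ladderP))).map
      (fun p => if toR (attachAt (.node []) (.node (νL.map ladderP)) p) = Tm νt then (1:ℚ) else 0)).sum
    = (if (νL : Multiset ℕ) + {0} = νt then (1:ℚ) else 0)
      + (νL.map (fun w => if (νL : Multiset ℕ).erase w + {w+1} = νt then (1:ℚ) else 0)).sum := by
  have hc := countCL νt νL νL [] rfl
  simp only [List.length_nil] at hc
  rw [positions_node, List.map_cons, List.sum_cons, hc]
  congr 1
  rw [attachAt]
  have : νL.map ladderP ++ [PTree.node []] = (νL ++ [0]).map ladderP := by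
    simp [ladderP_zero]
  rw [this]
  simp only [toR_node_lad_eq_Tm_iff]
  have hms : ((νL ++ [0] : List ℕ) : Multiset ℕ) = (νL : Multiset ℕ) + {0} := by
    rw [← Multiset.coe_add]
    rfl
  rw [hms]

end GOCaux3
section GOCaux4
open PTree

lemma l2_out : (toR (ladderP 1)).out = PTree.node [PTree.node []] := by
  have h : toR (toR (ladderP 1)).out = toR (.node [ladderP 0]) := Quot.out_eq _
  rw [toR_eq_node_iff (by rintro x hx; simp at hx; exact ⟨0, hx⟩)] at h
  obtain ⟨l, hl, hperm⟩ := h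
  rw [List.perm_singleton.mp hperm] at hl
  exact hl

lemma glMulP_l2 (s : PTree) : glMulP ℚ (PTree.node [PTree.node []]) s
    = ((positions s).map (fun p => Finsupp.single (toR (attachAt (.node []) s p)) (1:ℚ))).sum := by
  rw [glMulP]
  simp [List.sections, List.map_map, Function.comp_def, PTree.attachMany]

noncomputable def Aval (b : RTree) (νt : Multiset ℕ) : ℚ := (glMul ℚ (toR (ladderP 1)) b) (Tm νt)

lemma Aval_eq (b : RTree) (νt : Multiset ℕ) :
    Aval b νt = ((positions b.out).map
      (fun p => if toR (attachAt (.node []) b.out p) = Tm νt then (1:ℚ) else 0)).sum := by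
  rw [Aval, glMul, l2_out, glMulP_l2, list_single_sum_apply]

lemma Aval_Tm (ν' νt : Multiset ℕ) :
    Aval (Tm ν') νt = (if ν' + {0} = νt then (1:ℚ) else 0)
      + (ν'.map (fun w => if ν'.erase w + {w+1} = νt then (1:ℚ) else 0)).sum := by
  obtain ⟨l', hl', hcoe⟩ := Tm_out ν'
  rw [Aval_eq, hl', countFull]
  rw [← hcoe, Multiset.map_coe, Multiset.sum_coe]

/-- decrement a part (`v` is a ladder length; `v = 0` removes the part). -/
noncomputable def decm (v : ℕ) (νt : Multiset ℕ) : Multiset ℕ :=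
  if v = 0 then νt.erase 0 else νt.erase v + {v-1}

lemma Aval_ne_zero {b : RTree} {νt : Multiset ℕ} (h : Aval b νt ≠ 0) :
    ∃ v ∈ νt, b = Tm (decm v νt) := by
  rw [Aval_eq] at h
  have hex : ∃ p ∈ positions b.out, toR (attachAt (.node []) b.out p) = Tm νt := by
    by_contra hc
    push_neg at hc
    apply h
    apply List.sum_eq_zero
    intro x hx
    rw [List.mem_map] at hx
    obtain ⟨p, hp, rfl⟩ := hx
    rw [if_neg (hc p hp)]
  obtain ⟨p, hp, hattach⟩ := hex
  have hb : b = toR b.out := (Quot.out_eq b).symm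
  rcases hso : b.out with ⟨l₀⟩
  rw [hso] at hp hattach hb
  rw [mem_positions] at hp
  rcases hp with rfl | ⟨i, hi, q, hq, rfl⟩
  · -- root attachment
    rw [attachAt] at hattach
    have hlad : ∀ x ∈ l₀ ++ [PTree.node []], ∃ n, x = ladderP n := by
      rw [Tm, toR_eq_node_iff (mem_toList_lad νt)] at hattach
      obtain ⟨l, hl, hperm⟩ := hattach
      obtain rfl : l₀ ++ [PTree.node []] = l := by cases hl; rfl
      exact fun x hx => mem_toList_lad νt x (hperm.mem_iff.mp hx)
    have hlad0 : ∀ x ∈ l₀, ∃ n, x = ladderP n := fun x hx => hlad x (List.mem_append_left _ hx)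
    obtain ⟨ns, rfl⟩ := exists_map_lad hlad0
    have hrw : (ns.map ladderP) ++ [PTree.node []] = (ns ++ [0]).map ladderP := by
      simp [ladderP_zero]
    rw [hrw, toR_node_lad_eq_Tm_iff] at hattach
    have hcons : (0:ℕ) ::ₘ (ns : Multiset ℕ) = νt := by
      rw [← hattach, ← Multiset.coe_add, add_comm]
      rfl
    have h0mem : (0:ℕ) ∈ νt := by rw [← hcons]; simp
    refine ⟨0, h0mem, ?_⟩
    rw [hb, toR_node_lad_eq_Tm_iff,
      show decm 0 νt = νt.erase 0 from by simp [decm]]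
    rw [← hcons, Multiset.erase_cons_head]
  · -- attachment inside a branch
    rw [attachAt] at hattach
    set X := attachAt (.node []) (l₀[i]!) q with hX
    have hladset : ∀ x ∈ l₀.set i X, ∃ n, x = ladderP n := by
      rw [Tm, toR_eq_node_iff (mem_toList_lad νt)] at hattach
      obtain ⟨l, hl, hperm⟩ := hattach
      obtain rfl : l₀.set i X = l := by cases hl; rfl
      exact fun x hx => mem_toList_lad νt x (hperm.mem_iff.mp hx)
    have hXmem : X ∈ l₀.set i X := by
      rw [List.mem_iff_getElem]
      exact ⟨i, by simpa using hi, List.getElem_set_self ..⟩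
    obtain ⟨u, huX⟩ := hladset X hXmem
    have hu : attachAt (.node []) (l₀[i]!) q = ladderP u := hX ▸ huX
    obtain ⟨hu1, hci, hqr⟩ := attach_eq_ladder hq hu
    have hmseq := coe_set_add l₀ i hi X
    have hlad0 : ∀ x ∈ l₀, ∃ n, x = ladderP n := by
      intro x hx
      have hx2 : x ∈ (l₀ : Multiset PTree) + {X} := by
        rw [Multiset.mem_add]
        exact Or.inl (Multiset.mem_coe.mpr hx)
      rw [← hmseq, Multiset.mem_add] at hx2
      rcases hx2 with h' | h'
      · exact hladset x (Multiset.mem_coe.mp h')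
      · rw [Multiset.mem_singleton] at h'
        exact ⟨u-1, h' ▸ hci⟩
    obtain ⟨ns, hns⟩ := exists_map_lad hlad0
    obtain ⟨ms, hms⟩ := exists_map_lad hladset
    rw [hms, toR_node_lad_eq_Tm_iff] at hattach
    rw [hms, hci, huX, hns] at hmseq
    have hkey : (ms : Multiset ℕ) + {u-1} = (ns : Multiset ℕ) + {u} := by
      apply Multiset.map_injective ladderP_injective
      rw [Multiset.map_add, Multiset.map_add, Multiset.map_coe, Multiset.map_coe]
      simpa [Multiset.map_singleton] using hmseq
    rw [hattach] at hkey
    have humem : u ∈ νt := by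
      have hu2 : u ∈ (νt + ({u-1} : Multiset ℕ)) := by rw [hkey]; simp
      rw [Multiset.mem_add] at hu2
      rcases hu2 with h' | h'
      · exact h'
      · rw [Multiset.mem_singleton] at h'
        omega
    refine ⟨u, humem, ?_⟩
    have hne : u ≠ 0 := by omega
    rw [hb, hns, toR_node_lad_eq_Tm_iff,
      show decm u νt = νt.erase u + {u-1} from by simp [decm, hne]]
    have herase : (νt + ({u-1} : Multiset ℕ)).erase u = νt.erase u + {u-1} :=
      Multiset.erase_add_left_pos _ humem
    rw [hkey, show (ns : Multiset ℕ) + {u} = u ::ₘ (ns : Multiset ℕ) from by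
        rw [add_comm, Multiset.singleton_add], Multiset.erase_cons_head] at herase
    exact herase

end GOCaux4
section GOCaux5
open PTree

/-- product of factorials of the parts -/
noncomputable def Pfac (ν : Multiset ℕ) : ℕ := (ν.map (fun v => (v+1).factorial)).prod
/-- product of factorials of multiplicities -/
noncomputable def Sfac (ν : Multiset ℕ) : ℕ := ν.toFinset.prod (fun v => (ν.count v).factorial)
/-- the predicted coefficient -/
noncomputable def cval (k : ℕ) (ν : Multiset ℕ) : ℚ :=
  (k.factorial : ℚ) / ((Pfac ν : ℚ) * (Sfac ν : ℚ))
/-- the branching factor -/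
noncomputable def avals (v : ℕ) (νt : Multiset ℕ) : ℕ :=
  if v = 0 then 1 else νt.count (v-1) + 1

lemma Pfac_ne_zero (ν : Multiset ℕ) : Pfac ν ≠ 0 := by
  rw [Pfac, Ne, Multiset.prod_eq_zero_iff]
  intro h
  rw [Multiset.mem_map] at h
  obtain ⟨v, _, hv⟩ := h
  exact (v+1).factorial_ne_zero hv

lemma Sfac_ne_zero (ν : Multiset ℕ) : Sfac ν ≠ 0 := by
  rw [Sfac]
  apply Finset.prod_ne_zero_iff.mpr
  intro v _
  exact (ν.count v).factorial_ne_zero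

lemma Pfac_cons (a : ℕ) (m : Multiset ℕ) : Pfac (a ::ₘ m) = (a+1).factorial * Pfac m := by
  rw [Pfac, Multiset.map_cons, Multiset.prod_cons, Pfac]

lemma Sfac_cons (a : ℕ) (m : Multiset ℕ) : Sfac (a ::ₘ m) = (m.count a + 1) * Sfac m := by
  rw [Sfac, Sfac, Multiset.toFinset_cons]
  by_cases ha : a ∈ m.toFinset
  · rw [Finset.insert_eq_self.mpr ha, ← Finset.mul_prod_erase _ _ ha,
      ← Finset.mul_prod_erase _ (fun x => (m.count x).factorial) ha,
      Multiset.count_cons_self, Nat.factorial_succ, mul_assoc]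
    congr 1
    congr 1
    apply Finset.prod_congr rfl
    intro x hx
    rw [Multiset.count_cons_of_ne (Finset.ne_of_mem_erase hx)]
  · have hc : m.count a = 0 :=
      Multiset.count_eq_zero.mpr (fun h => ha (Multiset.mem_toFinset.mpr h))
    rw [Finset.prod_insert ha, Multiset.count_cons_self, hc]
    norm_num
    apply Finset.prod_congr rfl
    intro x hx
    rw [Multiset.count_cons_of_ne (by rintro rfl; exact ha hx)]

lemma keyD {v : ℕ} {νt : Multiset ℕ} (hv : v ∈ νt) :
    Pfac (decm v νt) * Sfac (decm v νt) * ((v+1) * νt.count v)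
      = Pfac νt * Sfac νt * avals v νt := by
  set ρ := νt.erase v with hρ
  have hνt : νt = v ::ₘ ρ := (Multiset.cons_erase hv).symm
  have hP : Pfac νt = (v+1).factorial * Pfac ρ := by
    conv_lhs => rw [hνt]
    rw [Pfac_cons]
  have hS : Sfac νt = (ρ.count v + 1) * Sfac ρ := by
    conv_lhs => rw [hνt]
    rw [Sfac_cons]
  have hcount : νt.count v = ρ.count v + 1 := by
    conv_lhs => rw [hνt]
    rw [Multiset.count_cons_self]
  by_cases h0 : v = 0
  · subst h0
    have hd : decm 0 νt = ρ := by rw [decm, if_pos rfl]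
    rw [hd, avals, if_pos rfl, hP, hS, hcount]
    simp [Nat.factorial]
    ring
  · have hd : decm v νt = (v-1) ::ₘ ρ := by
      rw [decm, if_neg h0, ← hρ, add_comm, Multiset.singleton_add]
    have hcount2 : ρ.count (v-1) = νt.count (v-1) :=
      Multiset.count_erase_of_ne (by omega) νt
    rw [hd, Pfac_cons, Sfac_cons, avals, if_neg h0, hP, hS, hcount, hcount2,
      show v - 1 + 1 = v from by omega, Nat.factorial_succ]
    ring

lemma decm_inj {νt : Multiset ℕ} {v v' : ℕ} (hv : v ∈ νt) (hv' : v' ∈ νt)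
    (h : decm v νt = decm v' νt) : v = v' := by
  by_contra hne
  have hpos := Multiset.count_pos.mpr hv'
  have h1 : (decm v' νt).count v' < νt.count v' := by
    rw [decm]
    by_cases h0 : v' = 0
    · subst h0
      rw [if_pos rfl, Multiset.count_erase_self]
      omega
    · rw [if_neg h0, Multiset.count_add, Multiset.count_erase_self, Multiset.count_singleton,
        if_neg (by omega)]
      omega
  have h2 : νt.count v' ≤ (decm v νt).count v' := by
    rw [decm]
    by_cases h0 : v = 0
    · subst h0
      rw [if_pos rfl, Multiset.count_erase_of_ne (by omega)]
    · rw [if_neg h0, Multiset.count_add,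
        Multiset.count_erase_of_ne (fun hh => hne hh.symm)]
      omega
  rw [h] at h2
  omega

lemma Aval_decm {v : ℕ} {νt : Multiset ℕ} (hv : v ∈ νt) :
    Aval (Tm (decm v νt)) νt = (avals v νt : ℚ) := by
  rw [Aval_Tm]
  set ρ := νt.erase v with hρ
  have hνt : νt = v ::ₘ ρ := (Multiset.cons_erase hv).symm
  by_cases h0 : v = 0
  · subst h0
    have hd : decm 0 νt = ρ := by rw [decm, if_pos rfl]
    rw [hd, if_pos (by rw [add_comm, Multiset.singleton_add, ← hνt])]
    have hz : (ρ.map (fun w => if ρ.erase w + {w+1} = νt then (1:ℚ) else 0)).sum = 0 := by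
      apply Multiset.sum_eq_zero
      intro x hx
      rw [Multiset.mem_map] at hx
      obtain ⟨w, hw, rfl⟩ := hx
      rw [if_neg]
      intro hcon
      have h1 := congrArg (Multiset.count (w+1)) hcon
      rw [Multiset.count_add, Multiset.count_erase_of_ne (by omega), Multiset.count_singleton,
        if_pos rfl, hνt, Multiset.count_cons_of_ne (by omega)] at h1
      omega
    rw [hz, avals, if_pos rfl]
    norm_num
  · have hd : decm v νt = (v-1) ::ₘ ρ := by
      rw [decm, if_neg h0, ← hρ, add_comm, Multiset.singleton_add]
    rw [hd, if_neg ?hroot]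
    case hroot =>
      intro hcon
      have h1 := congrArg (Multiset.count 0) hcon
      rw [Multiset.count_add, Multiset.count_cons, Multiset.count_singleton, hνt,
        Multiset.count_cons_of_ne (by omega)] at h1
      split_ifs at h1 <;> omega
    have hcong : ∀ w ∈ ((v-1) ::ₘ ρ), (if ((v-1) ::ₘ ρ).erase w + {w+1} = νt then (1:ℚ) else 0)
        = if w = v-1 then 1 else 0 := by
      intro w hw
      by_cases hwv : w = v - 1
      · subst hwv
        rw [if_pos rfl, if_pos]
        rw [Multiset.erase_cons_head, add_comm, Multiset.singleton_add,
          show v - 1 + 1 = v from by omega, ← hνt]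
      · rw [if_neg hwv, if_neg]
        intro hcon
        have hwρ : w ∈ ρ := by
          rcases Multiset.mem_cons.mp hw with h' | h'
          · exact absurd h' hwv
          · exact h'
        rw [Multiset.erase_cons_tail _ (by omega)] at hcon
        have h1 := congrArg (Multiset.count v) hcon
        rw [Multiset.count_add, Multiset.count_cons_of_ne (by omega), Multiset.count_singleton,
          hνt, Multiset.count_cons_self] at h1
        by_cases hw2 : v = w + 1
        · exact hwv (by omega)
        · rw [if_neg hw2] at h1
          by_cases hw3 : w = v
          · subst hw3
            rw [Multiset.count_erase_self] at h1
            have := Multiset.count_pos.mpr hwρ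
            omega
          · rw [Multiset.count_erase_of_ne (fun hh => hw3 hh.symm)] at h1
            omega
    rw [Multiset.map_congr rfl hcong, indicator_sum, Multiset.count_cons_self, avals, if_neg h0]
    have : ρ.count (v-1) = νt.count (v-1) := Multiset.count_erase_of_ne (by omega) νt
    rw [this]
    push_cast
    ring

end GOCaux5
section GOCaux6
open PTree

noncomputable def Nop : (RTree →₀ ℚ) → (RTree →₀ ℚ) :=
  fun f => glMulF (Finsupp.single (toR (ladderP 1)) (1 : ℚ)) f

lemma Nop_apply (f : RTree →₀ ℚ) (νt : Multiset ℕ) :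
    Nop f (Tm νt) = f.sum (fun b y => y * Aval b νt) := by
  rw [Nop, glMulF, Finsupp.sum_single_index (by simp), Finsupp.sum_apply]
  apply Finsupp.sum_congr
  intro b _
  rw [one_mul, Finsupp.smul_apply, smul_eq_mul]
  rfl

lemma Nop_apply_sum (f : RTree →₀ ℚ) (νt : Multiset ℕ) :
    Nop f (Tm νt) = ∑ v ∈ νt.toFinset, f (Tm (decm v νt)) * Aval (Tm (decm v νt)) νt := by
  rw [Nop_apply, Finsupp.sum]
  set TDF := νt.toFinset.image (fun v => Tm (decm v νt)) with hTDF
  have hvanish : ∀ b ∈ f.support ∪ TDF, b ∉ TDF → f b * Aval b νt = 0 := by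
    intro b _ hb
    by_contra hmul
    have hA : Aval b νt ≠ 0 := fun h => hmul (by rw [h, mul_zero])
    obtain ⟨v, hv, rfl⟩ := Aval_ne_zero hA
    exact hb (by rw [hTDF]; exact Finset.mem_image.mpr ⟨v, Multiset.mem_toFinset.mpr hv, rfl⟩)
  have h1 : ∑ b ∈ f.support, f b * Aval b νt = ∑ b ∈ f.support ∪ TDF, f b * Aval b νt :=
    Finset.sum_subset Finset.subset_union_left
      (fun b _ hb => by rw [Finsupp.notMem_support_iff.mp hb, zero_mul])
  have h2 : ∑ b ∈ TDF, f b * Aval b νt = ∑ b ∈ f.support ∪ TDF, f b * Aval b νt :=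
    Finset.sum_subset Finset.subset_union_right hvanish
  rw [h1, ← h2, hTDF, Finset.sum_image]
  intro v hv v' hv' h
  exact decm_inj (Multiset.mem_toFinset.mp hv) (Multiset.mem_toFinset.mp hv') (Tm_injective h)

lemma map_succ_sum (ν : Multiset ℕ) :
    (ν.map (fun v => v + 1)).sum = ν.sum + Multiset.card ν := by
  induction ν using Multiset.induction with
  | empty => simp
  | cons a s ih =>
    simp only [Multiset.map_cons, Multiset.sum_cons, Multiset.card_cons, ih]
    ring

lemma sum_weighted (ν : Multiset ℕ) :
    ∑ v ∈ ν.toFinset, (v+1) * ν.count v = ν.sum + Multiset.card ν := by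
  have h := Finset.sum_multiset_map_count ν (fun v => v + 1)
  rw [← map_succ_sum ν, h]
  apply Finset.sum_congr rfl
  intro v _
  rw [smul_eq_mul, mul_comm]

lemma main_induction : ∀ (k : ℕ) (ν : Multiset ℕ), ν.sum + Multiset.card ν = k →
    (Nop^[k] (Finsupp.single RTree.bullet 1)) (Tm ν) = cval k ν := by
  intro k
  induction k with
  | zero =>
    intro ν hν
    obtain rfl : ν = 0 := Multiset.card_eq_zero.mp (by omega)
    have hT : Tm 0 = RTree.bullet := by
      rw [Tm, Multiset.map_zero, Multiset.toList_zero]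
      rfl
    rw [Function.iterate_zero_apply, hT, Finsupp.single_eq_same, cval, Pfac, Sfac]
    simp
  | succ k ih =>
    intro ν hν
    rw [Function.iterate_succ_apply', Nop_apply_sum]
    have hterm : ∀ v ∈ ν.toFinset,
        (Nop^[k] (Finsupp.single RTree.bullet 1)) (Tm (decm v ν)) * Aval (Tm (decm v ν)) ν
        = (k.factorial : ℚ) * (((v+1) * ν.count v : ℕ) : ℚ) / ((Pfac ν : ℚ) * (Sfac ν : ℚ)) := by
      intro v hv
      have hvm := Multiset.mem_toFinset.mp hv
      have hsum : (decm v ν).sum + Multiset.card (decm v ν) = k := by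
        have hν2 : ν = v ::ₘ ν.erase v := (Multiset.cons_erase hvm).symm
        have hs := congrArg Multiset.sum hν2
        have hc := congrArg Multiset.card hν2
        rw [Multiset.sum_cons] at hs
        rw [Multiset.card_cons] at hc
        by_cases h0 : v = 0
        · subst h0
          rw [show decm 0 ν = ν.erase 0 from by rw [decm, if_pos rfl]]
          omega
        · rw [show decm v ν = (v-1) ::ₘ ν.erase v from by
            rw [decm, if_neg h0, add_comm, Multiset.singleton_add]]
          rw [Multiset.sum_cons, Multiset.card_cons]
          omega
      have hc : ((Pfac (decm v ν) : ℚ) * (Sfac (decm v ν) : ℚ)) * ((((v+1) * ν.count v : ℕ)) : ℚ)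
          = (Pfac ν : ℚ) * (Sfac ν : ℚ) * (avals v ν : ℚ) := by
        exact_mod_cast congrArg (Nat.cast : ℕ → ℚ) (keyD hvm)
      have hne1 : (Pfac (decm v ν) : ℚ) * (Sfac (decm v ν) : ℚ) ≠ 0 :=
        mul_ne_zero (Nat.cast_ne_zero.mpr (Pfac_ne_zero _)) (Nat.cast_ne_zero.mpr (Sfac_ne_zero _))
      have hne2 : (Pfac ν : ℚ) * (Sfac ν : ℚ) ≠ 0 :=
        mul_ne_zero (Nat.cast_ne_zero.mpr (Pfac_ne_zero _)) (Nat.cast_ne_zero.mpr (Sfac_ne_zero _))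
      rw [ih _ hsum, Aval_decm hvm, cval]
      rw [div_mul_eq_mul_div, div_eq_div_iff hne1 hne2]
      linear_combination (k.factorial : ℚ) * hc.symm
    rw [Finset.sum_congr rfl hterm]
    have hs : ∑ v ∈ ν.toFinset, (((v+1) * ν.count v : ℕ) : ℚ) = ((k+1 : ℕ) : ℚ) := by
      rw [← Nat.cast_sum, sum_weighted, hν]
    rw [← Finset.sum_div, ← Finset.mul_sum, hs, cval, Nat.factorial_succ]
    push_cast
    ring

end GOCaux6
section GOCaux7
open PTree

lemma symOrder_ladderP (n : ℕ) : (ladderP n).symOrder = 1 := by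
  induction n with
  | zero =>
    rw [ladderP_zero, PTree.symOrder]
    simp
  | succ n ih =>
    rw [ladderP_succ, PTree.symOrder]
    simp [ih]

lemma toR_lad_inj : Function.Injective (fun v : ℕ => toR (ladderP v)) := by
  intro a b h
  simp only at h
  cases b with
  | zero =>
    have hh := (toR_eq_node_iff (LL := []) (by simp) (ladderP a)).mp h
    obtain ⟨l, hl, hperm⟩ := hh
    rw [List.perm_nil.mp hperm] at hl
    cases a with
    | zero => rfl
    | succ a => rw [ladderP_succ] at hl; simp at hl
  | succ m =>
    have hh := (toR_eq_node_iff (LL := [ladderP m])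
      (by intro x hx; rw [List.mem_singleton] at hx; exact ⟨m, hx⟩) (ladderP a)).mp h
    obtain ⟨l, hl, hperm⟩ := hh
    rw [List.perm_singleton.mp hperm] at hl
    cases a with
    | zero => rw [ladderP_zero] at hl; simp at hl
    | succ a =>
      rw [ladderP_succ] at hl
      simp only [PTree.node.injEq, List.cons.injEq, and_true] at hl
      rw [ladderP_injective hl]

lemma sym_Tm (ν : Multiset ℕ) : (Tm ν).sym = Sfac ν := by
  obtain ⟨l', hl', hcoe⟩ := Tm_out ν
  rw [RTree.sym, hl', PTree.symOrder]
  have h1 : (((l'.map ladderP).attach.map (fun x => PTree.symOrder x.1))).prod = 1 := by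
    apply List.prod_eq_one
    intro x hx
    rw [List.mem_map] at hx
    obtain ⟨⟨y, hy⟩, _, rfl⟩ := hx
    rw [List.mem_map] at hy
    obtain ⟨n, _, rfl⟩ := hy
    exact symOrder_ladderP n
  rw [h1, one_mul]
  have h2 : (((l'.map ladderP).map toR : List RTree) : Multiset RTree)
      = ν.map (fun v => toR (ladderP v)) := by
    rw [List.map_map,
      show ((l'.map (toR ∘ ladderP) : List RTree) : Multiset RTree)
        = Multiset.map (toR ∘ ladderP) (l' : Multiset ℕ) from (Multiset.map_coe _ _).symm, hcoe]
    rfl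
  rw [h2, Multiset.toFinset_map, Finset.prod_image (fun x _ y _ hxy => toR_lad_inj hxy)]
  rw [Sfac]
  apply Finset.prod_congr rfl
  intro v _
  rw [Multiset.count_map_eq_count' _ _ toR_lad_inj]

lemma list_sum_pred (lam : List ℕ) (hpos : ∀ i ∈ lam, 1 ≤ i) :
    (lam.map (fun i => i - 1)).sum + lam.length = lam.sum := by
  induction lam with
  | nil => simp
  | cons a l ih =>
    simp only [List.map_cons, List.sum_cons, List.length_cons]
    have ha := hpos a (List.mem_cons_self)
    have hl := ih (fun i hi => hpos i (List.mem_cons_of_mem _ hi))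
    omega

end GOCaux7

/-- Let `λ = (λ₁,…,λ_m)` be a partition of `k` (a list of
positive integers with sum `k`) and let `t_λ = B₊(ℓ_{λ₁}⋯ℓ_{λ_m})`.  The
coefficient `n(•; t_λ)` of `t_λ` in `𝔑^k(•)`, where `𝔑(t) = ℓ₂ ∘ t`, equals
`(1/|Sym(t_λ)|)·k!/(λ₁!⋯λ_m!)`. -/
theorem growth_operator_coefficient (k : ℕ) (lam : List ℕ)
    (hpos : ∀ i ∈ lam, 1 ≤ i) (hsum : lam.sum = k) :
    ((fun f => glMulF (Finsupp.single (toR (ladderP 1)) (1 : ℚ)) f)^[k]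
        (Finsupp.single RTree.bullet 1))
      (toR (PTree.node (lam.map (fun i => ladderP (i - 1)))))
      = ((RTree.sym (toR (PTree.node (lam.map (fun i => ladderP (i - 1))))) : ℚ))⁻¹
          * (k.factorial : ℚ) / ((lam.map Nat.factorial).prod : ℚ) := by
  have hfun : (fun f => glMulF (Finsupp.single (toR (ladderP 1)) (1 : ℚ)) f) = Nop := rfl
  set ν : Multiset ℕ := ((lam.map (fun i => i - 1)) : Multiset ℕ) with hν
  have htree : toR (PTree.node (lam.map (fun i => ladderP (i - 1)))) = Tm ν := by
    rw [show lam.map (fun i => ladderP (i - 1)) = (lam.map (fun i => i - 1)).map ladderP from by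
      rw [List.map_map]; rfl]
    rw [toR_node_lad_eq_Tm_iff]
  have hsum2 : ν.sum + Multiset.card ν = k := by
    have h := list_sum_pred lam hpos
    rw [hν, Multiset.sum_coe, Multiset.coe_card, List.length_map]
    omega
  rw [hfun, htree, main_induction k ν hsum2, sym_Tm, cval]
  have hP : ((lam.map Nat.factorial).prod : ℚ) = (Pfac ν : ℚ) := by
    rw [Pfac, hν,
      show (Multiset.map (fun v => (v+1).factorial) ((lam.map (fun i => i-1) : List ℕ) : Multiset ℕ))
        = (((lam.map (fun i => i-1)).map (fun v => (v+1).factorial) : List ℕ) : Multiset ℕ) from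
          Multiset.map_coe _ _,
      Multiset.prod_coe, List.map_map]
    norm_cast
    congr 1
    apply List.map_congr_left
    intro a ha
    have := hpos a ha
    simp only [Function.comp_apply]
    congr 1
    omega
  rw [hP]
  have hPne : (Pfac ν : ℚ) ≠ 0 := Nat.cast_ne_zero.mpr (Pfac_ne_zero _)
  have hSne : (Sfac ν : ℚ) ≠ 0 := Nat.cast_ne_zero.mpr (Sfac_ne_zero _)
  rw [div_eq_div_iff (mul_ne_zero hPne hSne) hPne]
  field_simp
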